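/- Let d ≥ 1 and h ≥ 1 be integers, and let v be a positive integer all of whose prime factors divide d. Then the sum over squarefree divisors α of d of μ(α)·gcd(αv,h)/(α·gcd(v,h)) equals φ(d)/d if ν_p(v) ≥ ν_p(h) for every prime p dividing d, and equals 0 otherwise. -/

import Mathlib

open ArithmeticFunction
open scoped Classical

namespace InnerSumAux

lemma fact_or (m n q : ℕ) (hmn : Nat.Coprime m n) :
    m.factorization q = 0 ∨ n.factorization q = 0 := by
  by_contra hc
  push_neg at hc
  have h1 : q ∣ m := Nat.dvd_of_factorization_pos hc.1
  have h2 : q ∣ n := Nat.dvd_of_factorization_pos hc.2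
  have : q ∣ Nat.gcd m n := Nat.dvd_gcd h1 h2
  rw [hmn] at this
  have : q = 1 := Nat.eq_one_of_dvd_one this
  subst this
  exact hc.1 (Nat.factorization_eq_zero_of_not_prime m Nat.not_prime_one)

lemma gcd_id (m n v h : ℕ) (hm : m ≠ 0) (hn : n ≠ 0) (hv : v ≠ 0) (hh : h ≠ 0)
    (hmn : Nat.Coprime m n) :
    Nat.gcd (m * n * v) h * Nat.gcd v h = Nat.gcd (m * v) h * Nat.gcd (n * v) h := by
  have hmv : m * v ≠ 0 := by positivity
  have hnv : n * v ≠ 0 := by positivity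
  have hmnv : m * n * v ≠ 0 := by positivity
  apply Nat.eq_of_factorization_eq
  · exact Nat.mul_ne_zero (Nat.gcd_ne_zero_left hmnv) (Nat.gcd_ne_zero_left hv)
  · exact Nat.mul_ne_zero (Nat.gcd_ne_zero_left hmv) (Nat.gcd_ne_zero_left hnv)
  intro q
  rw [Nat.factorization_mul (Nat.gcd_ne_zero_left hmnv) (Nat.gcd_ne_zero_left hv),
    Nat.factorization_mul (Nat.gcd_ne_zero_left hmv) (Nat.gcd_ne_zero_left hnv)]
  simp only [Finsupp.add_apply, Nat.factorization_gcd hmnv hh, Nat.factorization_gcd hv hh,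
    Nat.factorization_gcd hmv hh, Nat.factorization_gcd hnv hh, Finsupp.inf_apply,
    Nat.factorization_mul hm hn, Nat.factorization_mul (Nat.mul_ne_zero hm hn) hv,
    Nat.factorization_mul hm hv, Nat.factorization_mul hn hv, Finsupp.add_apply]
  rcases fact_or m n q hmn with h0 | h0 <;> omega

/-- The multiplicative function `α ↦ gcd(αv, h) / (α · gcd(v,h))`. -/
noncomputable def F (v h : ℕ) : ArithmeticFunction ℚ :=
  ⟨fun α => (Nat.gcd (α * v) h : ℚ) / (α * Nat.gcd v h), by simp⟩

lemma F_apply (v h α : ℕ) : F v h α = (Nat.gcd (α * v) h : ℚ) / (α * Nat.gcd v h) := rfl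

lemma F_mult (v h : ℕ) (hv : v ≠ 0) (hh : h ≠ 0) : (F v h).IsMultiplicative := by
  constructor
  · rw [F_apply]
    rw [one_mul, Nat.cast_one, one_mul, div_self]
    exact_mod_cast (Nat.gcd_ne_zero_left hv)
  · intro m n hmn
    rcases eq_or_ne m 0 with rfl | hm
    · simp [F_apply]
    rcases eq_or_ne n 0 with rfl | hn
    · simp [F_apply]
    simp only [F_apply]
    have key := gcd_id m n v h hm hn hv hh hmn
    have hg : (Nat.gcd v h : ℚ) ≠ 0 := by exact_mod_cast (Nat.gcd_ne_zero_left hv)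
    have hm' : (m : ℚ) ≠ 0 := Nat.cast_ne_zero.mpr hm
    have hn' : (n : ℚ) ≠ 0 := Nat.cast_ne_zero.mpr hn
    have key' : ((Nat.gcd (m * n * v) h : ℚ)) * Nat.gcd v h
        = Nat.gcd (m * v) h * Nat.gcd (n * v) h := by exact_mod_cast key
    rw [div_mul_div_comm, div_eq_div_iff (by push_cast; positivity)
      (by push_cast; positivity)]
    push_cast
    linear_combination ((m : ℚ) * n * Nat.gcd v h) * key'

lemma gcd_A (p v h : ℕ) (hp : p.Prime) (hv : v ≠ 0) (hh : h ≠ 0)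
    (hle : h.factorization p ≤ v.factorization p) :
    Nat.gcd (p * v) h = Nat.gcd v h := by
  have hpv : p * v ≠ 0 := Nat.mul_ne_zero hp.ne_zero hv
  apply Nat.eq_of_factorization_eq (Nat.gcd_ne_zero_left hpv) (Nat.gcd_ne_zero_left hv)
  intro q
  rw [Nat.factorization_gcd hpv hh, Nat.factorization_gcd hv hh]
  simp only [Finsupp.inf_apply, Nat.factorization_mul hp.ne_zero hv, Finsupp.add_apply,
    hp.factorization, Finsupp.single_apply]
  rcases eq_or_ne p q with rfl | hq
  · simp only [min_def]
    split_ifs <;> omega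
  · simp [hq]

lemma gcd_B (p v h : ℕ) (hp : p.Prime) (hv : v ≠ 0) (hh : h ≠ 0)
    (hle : ¬ h.factorization p ≤ v.factorization p) :
    Nat.gcd (p * v) h = p * Nat.gcd v h := by
  have hpv : p * v ≠ 0 := Nat.mul_ne_zero hp.ne_zero hv
  apply Nat.eq_of_factorization_eq (Nat.gcd_ne_zero_left hpv)
    (Nat.mul_ne_zero hp.ne_zero (Nat.gcd_ne_zero_left hv))
  intro q
  rw [Nat.factorization_gcd hpv hh,
    Nat.factorization_mul hp.ne_zero (Nat.gcd_ne_zero_left hv), Nat.factorization_gcd hv hh]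
  simp only [Finsupp.inf_apply, Nat.factorization_mul hp.ne_zero hv, Finsupp.add_apply,
    hp.factorization, Finsupp.single_apply]
  rcases eq_or_ne p q with rfl | hq
  · simp only [min_def]
    split_ifs <;> omega
  · simp [hq]

end InnerSumAux

open InnerSumAux

theorem inner_sum_eval (d h v : ℕ) (hd : 1 ≤ d) (hh : 1 ≤ h) (hv : 0 < v)
    (hvd : ∀ q : ℕ, q.Prime → q ∣ v → q ∣ d) :
    ∑ α ∈ d.divisors, (moebius α : ℚ) * Nat.gcd (α * v) h / (α * Nat.gcd v h)
      = if ∀ p : ℕ, p.Prime → p ∣ d → h.factorization p ≤ v.factorization p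
        then (Nat.totient d : ℚ) / d else 0 := by
  have hd0 : d ≠ 0 := by omega
  have hh0 : h ≠ 0 := by omega
  have hv0 : v ≠ 0 := hv.ne'
  set r : ℕ := ∏ p ∈ d.primeFactors, p with hr
  have hrd : r ∣ d := Nat.prod_primeFactors_dvd d
  have hr0 : r ≠ 0 := fun h0 => hd0 (Nat.eq_zero_of_zero_dvd (h0 ▸ hrd))
  have hrsf : Squarefree r := by
    rw [Nat.squarefree_iff_factorization_le_one hr0]
    intro q
    rw [hr, Nat.factorization_prod (fun p hp => (Nat.prime_of_mem_primeFactors hp).ne_zero)]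
    rw [Finsupp.finset_sum_apply]
    calc ∑ p ∈ d.primeFactors, p.factorization q
        = ∑ p ∈ d.primeFactors, if p = q then 1 else 0 := by
          refine Finset.sum_congr rfl fun p hp => ?_
          rw [(Nat.prime_of_mem_primeFactors hp).factorization, Finsupp.single_apply]
      _ ≤ 1 := by
          rw [Finset.sum_ite_eq']
          split <;> simp
  have hrpf : r.primeFactors = d.primeFactors :=
    Nat.primeFactors_prod (fun p hp => Nat.prime_of_mem_primeFactors hp)
  -- step 1: rewrite the sum as a sum of μ * F over divisors of d
  have step1 : ∑ α ∈ d.divisors, (moebius α : ℚ) * Nat.gcd (α * v) h / (α * Nat.gcd v h)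
      = ∑ α ∈ d.divisors, (moebius α : ℚ) * F v h α := by
    refine Finset.sum_congr rfl fun α hα => ?_
    rw [F_apply, mul_div_assoc]
  -- step 2: restrict to divisors of r
  have step2 : ∑ α ∈ d.divisors, (moebius α : ℚ) * F v h α
      = ∑ α ∈ r.divisors, (moebius α : ℚ) * F v h α := by
    refine (Finset.sum_subset (Nat.divisors_subset_of_dvd hd0 hrd) fun α hα hα' => ?_).symm
    have hαd : α ∣ d := (Nat.mem_divisors.mp hα).1
    have : ¬ Squarefree α := by
      intro hsf
      apply hα'
      rw [Nat.mem_divisors]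
      refine ⟨?_, hr0⟩
      calc α = ∏ p ∈ α.primeFactors, p := (Nat.prod_primeFactors_of_squarefree hsf).symm
        _ ∣ r := Finset.prod_dvd_prod_of_subset _ _ _
            (Nat.primeFactors_mono hαd hd0)
    rw [moebius_eq_zero_of_not_squarefree this]
    simp
  rw [step1, step2]
  rw [← (F_mult v h hv0 hh0).prodPrimeFactors_one_sub_of_squarefree (F v h) hrsf, hrpf]
  have hgcd : (Nat.gcd v h : ℚ) ≠ 0 := by exact_mod_cast Nat.gcd_ne_zero_left hv0
  split
  · next hcond =>
    have : ∀ p ∈ d.primeFactors, 1 - F v h p = 1 - (p : ℚ)⁻¹ := by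
      intro p hp
      have hpp := Nat.prime_of_mem_primeFactors hp
      have hpd := Nat.dvd_of_mem_primeFactors hp
      rw [F_apply, gcd_A p v h hpp hv0 hh0 (hcond p hpp hpd)]
      rw [mul_comm (p : ℚ), div_mul_eq_div_div, div_self hgcd, one_div]
    rw [Finset.prod_congr rfl this]
    rw [eq_div_iff (Nat.cast_ne_zero.mpr hd0 : (d:ℚ) ≠ 0)]
    rw [Nat.totient_eq_mul_prod_factors d]
    ring
  · next hcond =>
    push_neg at hcond
    obtain ⟨p, hpp, hpd, hlt⟩ := hcond
    refine Finset.prod_eq_zero (Nat.mem_primeFactors.mpr ⟨hpp, hpd, hd0⟩) ?_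
    rw [F_apply, gcd_B p v h hpp hv0 hh0 (not_le.mpr hlt)]
    push_cast
    rw [div_self (mul_ne_zero (Nat.cast_ne_zero.mpr hpp.ne_zero) hgcd)]
    ring
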